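/- arXiv:2002.06756 — 2 statements merged into one kernel-verified Lean document; each statement's English description precedes it below -/
import Mathlib

section
/- For the Duffing–van der Pol system with drift f(x) = (x₂, −3x₁ − 2x₂ − 2x₂x₁² − x₁³) and diffusion matrix g(x) with rows (0,0) and (√2 x₁, √(2.5) x₂), let V(x) = x₁⁴ + x₂² + x₁x₂ + 4x₁². Then L V(x) := ⟨∇V(x), f(x)⟩ + ½ tr( g(x)^T D²V(x) g(x) ) = −4x₁²x₂² − x₁² − 0.5 x₂² − x₁⁴ ≤ −0.5 |x|² for all x ∈ ℝ². -/
open Real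

noncomputable section StmtAux

private abbrev E2 := EuclideanSpace ℝ (Fin 2)

private def pj (i : Fin 2) : E2 →L[ℝ] ℝ := EuclideanSpace.proj i

private lemma pj_apply (i : Fin 2) (x : E2) : pj i x = x i := rfl

private def V0 : E2 → ℝ := fun x => (x 0) ^ 4 + (x 1) ^ 2 + (x 0) * (x 1) + 4 * (x 0) ^ 2

private def D1 (x : E2) : E2 →L[ℝ] ℝ :=
  (4 * (x 0) ^ 3 + x 1 + 8 * (x 0)) • pj 0 + (2 * (x 1) + x 0) • pj 1

private lemma hasFDerivV0 (x : E2) : HasFDerivAt V0 (D1 x) x := by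
  have h0 := (pj 0).hasFDerivAt (x := x)
  have h1 := (pj 1).hasFDerivAt (x := x)
  have hp0 : ∀ n : ℕ, HasFDerivAt (fun y : E2 => (pj 0 y) ^ n)
      (((n : ℝ) * (pj 0 x) ^ (n - 1)) • pj 0) x :=
    fun n => (hasDerivAt_pow n _).comp_hasFDerivAt x h0
  have hp1 : ∀ n : ℕ, HasFDerivAt (fun y : E2 => (pj 1 y) ^ n)
      (((n : ℝ) * (pj 1 x) ^ (n - 1)) • pj 1) x :=
    fun n => (hasDerivAt_pow n _).comp_hasFDerivAt x h1
  have h := (((hp0 4).add (hp1 2)).add (h0.mul h1)).add ((hp0 2).const_mul 4)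
  refine h.congr_fderiv ?_
  ext v
  simp [D1, pj_apply]
  ring

private def D2 (x : E2) : E2 →L[ℝ] (E2 →L[ℝ] ℝ) :=
  (((4:ℝ) • (((3:ℕ) * pj 0 x ^ 2) • pj 0) + pj 1) + (8:ℝ) • pj 0).smulRight (pj 0)
    + ((2:ℝ) • pj 1 + pj 0).smulRight (pj 1)

private lemma hasFDerivD1 (x : E2) : HasFDerivAt D1 (D2 x) x := by
  have h0 := (pj 0).hasFDerivAt (x := x)
  have h1 := (pj 1).hasFDerivAt (x := x)
  have hp0 : ∀ n : ℕ, HasFDerivAt (fun y : E2 => (pj 0 y) ^ n)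
      (((n : ℝ) * (pj 0 x) ^ (n - 1)) • pj 0) x :=
    fun n => (hasDerivAt_pow n _).comp_hasFDerivAt x h0
  have hc1 : HasFDerivAt (fun x : E2 => 4 * (pj 0 x) ^ 3 + pj 1 x + 8 * (pj 0 x))
      (((4:ℝ) • (((3:ℕ) * pj 0 x ^ 2) • pj 0) + pj 1) + (8:ℝ) • pj 0) x :=
    (((hp0 3).const_mul 4).add h1).add (h0.const_mul 8)
  have hc2 : HasFDerivAt (fun x : E2 => 2 * (pj 1 x) + pj 0 x) ((2:ℝ) • pj 1 + pj 0) x :=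
    (h1.const_mul 2).add h0
  exact (hc1.smul_const (pj 0)).add (hc2.smul_const (pj 1))

end StmtAux

set_option maxHeartbeats 1000000

theorem stmt_14
    (V : EuclideanSpace ℝ (Fin 2) → ℝ)
    (hV : ∀ x, V x = (x 0) ^ 4 + (x 1) ^ 2 + (x 0) * (x 1) + 4 * (x 0) ^ 2)
    (f : EuclideanSpace ℝ (Fin 2) → EuclideanSpace ℝ (Fin 2))
    (hf : ∀ x, f x = (WithLp.equiv 2 (Fin 2 → ℝ)).symm
      ![x 1, -3 * (x 0) - 2 * (x 1) - 2 * (x 1) * (x 0) ^ 2 - (x 0) ^ 3])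
    (gcol : EuclideanSpace ℝ (Fin 2) → Fin 2 → EuclideanSpace ℝ (Fin 2))
    (hg : ∀ x j, gcol x j = (WithLp.equiv 2 (Fin 2 → ℝ)).symm
      ![0, ![Real.sqrt 2 * (x 0), Real.sqrt 2.5 * (x 1)] j])
    (LV : EuclideanSpace ℝ (Fin 2) → ℝ)
    (hL : ∀ x, LV x = (inner ℝ (gradient V x) (f x) : ℝ) +
      (1 / 2) * ∑ j : Fin 2, fderiv ℝ (fderiv ℝ V) x (gcol x j) (gcol x j)) :
    ∀ x : EuclideanSpace ℝ (Fin 2),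
      LV x = -4 * (x 0) ^ 2 * (x 1) ^ 2 - (x 0) ^ 2 - 0.5 * (x 1) ^ 2 - (x 0) ^ 4 ∧
      LV x ≤ -0.5 * ‖x‖ ^ 2 := by
  have hVV0 : V = V0 := funext fun x => by rw [hV]; rfl
  have hfd : fderiv ℝ V = D1 := by
    rw [hVV0]; exact funext fun x => (hasFDerivV0 x).fderiv
  intro x
  have hmain : LV x = -4 * (x 0) ^ 2 * (x 1) ^ 2 - (x 0) ^ 2 - 0.5 * (x 1) ^ 2 - (x 0) ^ 4 := by
    rw [hL x]
    have hgrad : (inner ℝ (gradient V x) (f x) : ℝ) = fderiv ℝ V x (f x) := by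
      rw [gradient]; exact InnerProductSpace.toDual_symm_apply
    have hfd2 : fderiv ℝ (fderiv ℝ V) x = D2 x := by
      rw [hfd]; exact (hasFDerivD1 x).fderiv
    rw [hgrad, hfd2, hfd, hf x]
    have h2 : Real.sqrt 2 * Real.sqrt 2 = 2 := Real.mul_self_sqrt (by norm_num)
    have h25 : Real.sqrt 2.5 * Real.sqrt 2.5 = 2.5 := Real.mul_self_sqrt (by norm_num)
    simp [D1, D2, hg x, Fin.sum_univ_two, pj_apply,
      WithLp.equiv_symm_apply, PiLp.toLp_apply, Matrix.cons_val_zero, Matrix.cons_val_one, Matrix.head_cons,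
      ContinuousLinearMap.smulRight_apply, smul_eq_mul]
    nlinarith [h2, h25, sq_nonneg (x 0), sq_nonneg (x 1)]
  have hnorm : ‖x‖ ^ 2 = (x 0) ^ 2 + (x 1) ^ 2 := by
    rw [EuclideanSpace.norm_eq, Real.sq_sqrt (by positivity)]
    simp [Fin.sum_univ_two, sq_abs]
  constructor
  · exact hmain
  · rw [hmain, hnorm]
    nlinarith [sq_nonneg (x 0), sq_nonneg (x 1), sq_nonneg (x 0 * x 1), sq_nonneg ((x 0)^2)]
end

section
/- Let (V_k)_{k≥0} be a nonnegative adapted process on a filtered probability space with V_k = V_0 + A_k − U_k + M_k, where (A_k) and (U_k) are almost surely nondecreasing predictable processes with A_0 = U_0 = 0 and (M_k) is a martingale with M_0 = 0. Then almost surely on the event {lim_k A_k < ∞}, one has lim_k U_k < ∞ and lim_k V_k exists and is finite. -/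
open MeasureTheory Filter Topology

lemma aux_path (c : ℝ) (hc : 0 ≤ c) (A M : ℕ → ℝ) (hA0 : A 0 = 0) (hM0 : M 0 = 0)
    (ξ : ℕ → ℝ) (hξ1 : ∀ k, (∀ j ≤ k, A (j + 1) ≤ c) → ξ k = 1)
    (hξ0 : ∀ k, ¬(∀ j ≤ k, A (j + 1) ≤ c) → ξ k = 0) (n : ℕ) :
    ∃ m, m ≤ n ∧ (∑ k ∈ Finset.range n, ξ k * (A (k + 1) - A k)) = A m ∧
      (∑ k ∈ Finset.range n, ξ k * (M (k + 1) - M k)) = M m ∧ A m ≤ c ∧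
      ((∀ j < n, A (j + 1) ≤ c) → m = n) := by
  induction n with
  | zero => exact ⟨0, le_rfl, by simp [hA0], by simp [hM0], by simp [hA0, hc], fun _ => rfl⟩
  | succ n ih =>
    obtain ⟨m, hmn, hGA, hGM, hAm, hlast⟩ := ih
    by_cases h : ∀ j ≤ n, A (j + 1) ≤ c
    · have hm : m = n := hlast fun j hj => h j (Nat.lt_succ_iff.mp (Nat.lt_succ_of_lt hj))
      refine ⟨n + 1, le_rfl, ?_, ?_, h n le_rfl, fun _ => rfl⟩
      · rw [Finset.sum_range_succ, hGA, hm, hξ1 n h]; ring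
      · rw [Finset.sum_range_succ, hGM, hm, hξ1 n h]; ring
    · refine ⟨m, hmn.trans n.le_succ, ?_, ?_, hAm,
        fun hall => absurd (fun j hj => hall j (Nat.lt_succ_of_le hj)) h⟩
      · rw [Finset.sum_range_succ, hGA, hξ0 n h]; ring
      · rw [Finset.sum_range_succ, hGM, hξ0 n h]; ring

lemma key_lemma {Ω : Type*} {m0 : MeasurableSpace Ω} {μ : Measure Ω}
    [IsProbabilityMeasure μ] (ℱ : Filtration ℕ m0)
    (V A U M : ℕ → Ω → ℝ)
    (hVnonneg : ∀ k ω, 0 ≤ V k ω)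
    (hVadapted : Adapted ℱ V)
    (hrep : ∀ k ω, V k ω = V 0 ω + A k ω - U k ω + M k ω)
    (hA0 : ∀ ω, A 0 ω = 0) (hU0 : ∀ ω, U 0 ω = 0)
    (hAmono : ∀ᵐ ω ∂μ, Monotone fun k => A k ω)
    (hUmono : ∀ᵐ ω ∂μ, Monotone fun k => U k ω)
    (hApred : ∀ k, StronglyMeasurable[ℱ k] (A (k + 1)))
    (hM : Martingale M ℱ μ) (hM0 : ∀ ω, M 0 ω = 0) (c : ℕ) :
    ∀ᵐ ω ∂μ, (V 0 ω ≤ c ∧ ∀ j, A (j + 1) ω ≤ c) →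
      ∃ L, Tendsto (fun n => V n ω + U n ω) atTop (𝓝 L) := by
  classical
  have hcnn : (0:ℝ) ≤ c := Nat.cast_nonneg c
  set ξ : ℕ → Ω → ℝ :=
    fun k ω => if (V 0 ω ≤ c ∧ ∀ j ≤ k, A (j + 1) ω ≤ c) then 1 else 0 with hξdef
  -- measurability of A
  have hAmeas : ∀ k, StronglyMeasurable[ℱ k] (A k) := by
    intro k
    cases k with
    | zero =>
      have : A 0 = fun _ => (0:ℝ) := funext hA0
      rw [this]; exact stronglyMeasurable_const
    | succ k => exact (hApred k).mono (ℱ.mono k.le_succ)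
  -- adaptedness of ξ
  have hξadp : StronglyAdapted ℱ ξ := by
    intro k
    have hS : MeasurableSet[ℱ k] {ω | V 0 ω ≤ (c:ℝ) ∧ ∀ j ≤ k, A (j + 1) ω ≤ c} := by
      have h1 : MeasurableSet[ℱ k] {ω | V 0 ω ≤ (c:ℝ)} :=
        measurableSet_le ((hVadapted 0).mono (ℱ.mono (Nat.zero_le k)) le_rfl)
          measurable_const
      have heq : {ω | V 0 ω ≤ (c:ℝ) ∧ ∀ j ≤ k, A (j + 1) ω ≤ c}
          = {ω | V 0 ω ≤ (c:ℝ)} ∩ ⋂ j ∈ Set.Iic k, {ω | A (j + 1) ω ≤ (c:ℝ)} := by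
        ext ω; simp [Set.mem_iInter]
      rw [heq]
      exact h1.inter (MeasurableSet.biInter (Set.to_countable _) fun j hj =>
        measurableSet_le ((hApred j).mono (ℱ.mono hj)).measurable measurable_const)
    have : ξ k = Set.indicator {ω | V 0 ω ≤ (c:ℝ) ∧ ∀ j ≤ k, A (j + 1) ω ≤ c}
        (fun _ => (1:ℝ)) := by
      funext ω
      simp only [hξdef, Set.indicator_apply, Set.mem_setOf_eq]
    rw [this]
    exact stronglyMeasurable_const.indicator hS
  have hξle : ∀ k ω, ξ k ω ≤ 1 := by
    intro k ω; simp only [hξdef]; split_ifs <;> norm_num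
  have hξnn : ∀ k ω, 0 ≤ ξ k ω := by
    intro k ω; simp only [hξdef]; split_ifs <;> norm_num
  -- the martingale part
  set N : ℕ → Ω → ℝ := fun n => ∑ k ∈ Finset.range n, ξ k * (M (k + 1) - M k) with hNdef
  have hNsub : Submartingale N ℱ μ :=
    hM.submartingale.sum_mul_sub hξadp (fun k ω => hξle k ω) (fun k ω => hξnn k ω)
  have hNsub' : Submartingale
      (fun n => ∑ k ∈ Finset.range n, ξ k * ((-M) (k + 1) - (-M) k)) ℱ μ :=
    hM.neg.submartingale.sum_mul_sub hξadp (fun k ω => hξle k ω) (fun k ω => hξnn k ω)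
  have hNeq : (fun n => ∑ k ∈ Finset.range n, ξ k * ((-M) (k + 1) - (-M) k)) = -N := by
    funext n ω
    simp only [hNdef, Finset.sum_apply, Pi.mul_apply, Pi.sub_apply, Pi.neg_apply,
      ← Finset.sum_neg_distrib]
    exact Finset.sum_congr rfl fun k _ => by ring
  have hNsuper : Supermartingale N ℱ μ := by
    have := (hNeq ▸ hNsub').neg
    simpa using this
  have hNmart : Martingale N ℱ μ := martingale_iff.mpr ⟨hNsuper, hNsub⟩
  have hN0 : N 0 = 0 := by simp [hNdef]
  have hNintegral : ∀ n, ∫ ω, N n ω ∂μ = 0 := by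
    intro n
    rw [← integral_condExp (ℱ.le 0),
      integral_congr_ae (hNmart.condExp_ae_eq (Nat.zero_le n)), hN0]
    simp
  -- the increasing part
  set G : ℕ → Ω → ℝ :=
    fun n ω => ∑ k ∈ Finset.range n, ξ k ω * (A (k + 1) ω - A k ω) with hGdef
  have hGmeas : ∀ n m : ℕ, n ≤ m + 1 → StronglyMeasurable[ℱ m] (G n) := by
    intro n m hnm
    apply Finset.stronglyMeasurable_fun_sum
    intro k hk
    have hkm : k ≤ m := Nat.lt_succ_iff.mp (lt_of_lt_of_le (Finset.mem_range.mp hk) hnm)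
    exact ((hξadp k).mono (ℱ.mono hkm)).mul
      (((hApred k).mono (ℱ.mono hkm)).sub ((hAmeas k).mono (ℱ.mono hkm)))
  have hGadp : StronglyAdapted ℱ G := fun n => hGmeas n n n.le_succ
  have hGint : ∀ n, Integrable (G n) μ := by
    intro n
    apply integrable_finset_sum
    intro k hk
    refine Integrable.mono' (integrable_const (c:ℝ))
      (((hξadp k).mono (ℱ.le k)).mul
        (((hApred k).mono (ℱ.le k)).sub ((hAmeas k).mono (ℱ.le k)))).aestronglyMeasurable ?_
    filter_upwards [hAmono] with ω hmono
    by_cases h : V 0 ω ≤ (c:ℝ) ∧ ∀ j ≤ k, A (j + 1) ω ≤ c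
    · have hξ1 : ξ k ω = 1 := if_pos h
      have h1 : 0 ≤ A (k + 1) ω - A k ω := sub_nonneg.mpr (hmono k.le_succ)
      have h2 : 0 ≤ A k ω := hA0 ω ▸ hmono (Nat.zero_le k)
      have h3 : A (k + 1) ω ≤ c := h.2 k le_rfl
      rw [hξ1, one_mul, Real.norm_eq_abs, abs_of_nonneg h1]
      linarith
    · have hξ0 : ξ k ω = 0 := if_neg h
      rw [hξ0, zero_mul, norm_zero]
      exact hcnn
  have hGsub : Submartingale G ℱ μ := by
    refine submartingale_nat hGadp hGint fun i => ?_
    rw [condExp_of_stronglyMeasurable (ℱ.le i) (hGmeas (i + 1) i le_rfl) (hGint (i + 1))]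
    filter_upwards [hAmono] with ω hmono
    have : G (i + 1) ω = G i ω + ξ i ω * (A (i + 1) ω - A i ω) := by
      simp [hGdef, Finset.sum_range_succ]
    rw [this]
    have h1 : 0 ≤ A (i + 1) ω - A i ω := sub_nonneg.mpr (hmono i.le_succ)
    nlinarith [hξnn i ω]
  -- the initial value part
  set F : Ω → ℝ := fun ω => if V 0 ω ≤ (c:ℝ) then V 0 ω else 0 with hFdef
  have hFmeas : StronglyMeasurable[ℱ 0] F := by
    have hS : MeasurableSet[ℱ 0] {ω | V 0 ω ≤ (c:ℝ)} :=
      measurableSet_le (hVadapted 0) measurable_const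
    have : F = Set.indicator {ω | V 0 ω ≤ (c:ℝ)} (V 0) := by
      funext ω; simp only [hFdef, Set.indicator_apply, Set.mem_setOf_eq]
    rw [this]
    exact ((hVadapted 0).indicator hS).stronglyMeasurable
  have hFbd : ∀ ω, 0 ≤ F ω ∧ F ω ≤ c := by
    intro ω
    simp only [hFdef]
    split_ifs with h
    · exact ⟨hVnonneg 0 ω, h⟩
    · exact ⟨le_rfl, hcnn⟩
  have hFint : Integrable F μ := by
    refine Integrable.mono' (integrable_const (c:ℝ))
      (hFmeas.mono (ℱ.le 0)).aestronglyMeasurable ?_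
    filter_upwards with ω
    rw [Real.norm_eq_abs, abs_of_nonneg (hFbd ω).1]
    exact (hFbd ω).2
  have hFmart : Martingale (fun _ : ℕ => F) ℱ μ := martingale_const_fun ℱ μ hFmeas hFint
  -- the stopped process
  set Y : ℕ → Ω → ℝ := G + N + fun _ => F with hYdef
  have hYsub : Submartingale Y ℱ μ := (hGsub.add_martingale hNmart).add_martingale hFmart
  have hYapp : ∀ n ω, Y n ω = G n ω + N n ω + F ω := fun n ω => rfl
  -- pathwise identities
  have hξ1' : ∀ ω, V 0 ω ≤ (c:ℝ) → ∀ k, (∀ j ≤ k, A (j + 1) ω ≤ c) → ξ k ω = 1 :=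
    fun ω hV0 k h => if_pos ⟨hV0, h⟩
  have hξ0' : ∀ ω, ∀ k, ¬(∀ j ≤ k, A (j + 1) ω ≤ c) → ξ k ω = 0 :=
    fun ω k h => if_neg fun hh => h hh.2
  have hYae : ∀ᵐ ω ∂μ, ∀ n, 0 ≤ Y n ω ∧ G n ω ≤ c := by
    filter_upwards [hAmono, hUmono] with ω hmonoA hmonoU
    intro n
    by_cases hV0 : V 0 ω ≤ (c:ℝ)
    · obtain ⟨m, _, hGA, hNM, hAmc, -⟩ := aux_path c hcnn (fun k => A k ω) (fun k => M k ω)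
        (hA0 ω) (hM0 ω) (fun k => ξ k ω) (hξ1' ω hV0) (hξ0' ω) n
      have hGn : G n ω = A m ω := hGA
      have hNn : N n ω = M m ω := by
        simpa only [hNdef, Finset.sum_apply, Pi.mul_apply, Pi.sub_apply] using hNM
      have hUm : 0 ≤ U m ω := hU0 ω ▸ hmonoU (Nat.zero_le m)
      have hV := hrep m ω
      constructor
      · rw [hYapp, hGn, hNn]
        simp only [hFdef, if_pos hV0]
        have := hVnonneg m ω
        linarith
      · rw [hGn]; exact hAmc
    · have hξz : ∀ k, ξ k ω = 0 := fun k => if_neg fun hh => hV0 hh.1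
      have hG0 : G n ω = 0 := Finset.sum_eq_zero fun k _ => by rw [hξz k]; ring
      have hN0' : N n ω = 0 := by
        simp only [hNdef, Finset.sum_apply, Pi.mul_apply, Pi.sub_apply]
        exact Finset.sum_eq_zero fun k _ => by rw [hξz k]; ring
      have hF0 : F ω = 0 := if_neg hV0
      constructor
      · rw [hYapp, hG0, hN0', hF0]; norm_num
      · rw [hG0]; exact hcnn
  -- L¹ bound
  have hYbd : ∀ n, eLpNorm (Y n) 1 μ ≤ ((2 * c : ℝ).toNNReal : ENNReal) := by
    intro n
    have hint : ∫ ω, Y n ω ∂μ ≤ 2 * c := by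
      have h1 : ∫ ω, Y n ω ∂μ = (∫ ω, G n ω ∂μ) + (∫ ω, N n ω ∂μ) + ∫ ω, F ω ∂μ := by
        have hGN : Integrable (fun ω => G n ω + N n ω) μ := (hGint n).add (hNsub.integrable n)
        simp only [hYapp]
        rw [integral_add hGN hFint, integral_add (hGint n) (hNsub.integrable n)]
      have h2 : ∫ ω, G n ω ∂μ ≤ ∫ _, (c:ℝ) ∂μ := by
        refine integral_mono_ae (hGint n) (integrable_const _) ?_
        filter_upwards [hYae] with ω hω using (hω n).2
      have h3 : ∫ ω, F ω ∂μ ≤ ∫ _, (c:ℝ) ∂μ :=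
        integral_mono hFint (integrable_const _) fun ω => (hFbd ω).2
      rw [h1, hNintegral n]
      simp only [integral_const, measure_univ, probReal_univ, ENNReal.toReal_one, smul_eq_mul, one_mul] at h2 h3
      linarith
    rw [eLpNorm_one_eq_lintegral_enorm,
      ← ofReal_integral_norm_eq_lintegral_enorm (hYsub.integrable n)]
    refine ENNReal.ofReal_le_ofReal ?_
    have : ∫ ω, ‖Y n ω‖ ∂μ = ∫ ω, Y n ω ∂μ := by
      refine integral_congr_ae ?_
      filter_upwards [hYae] with ω hω
      exact (Real.norm_eq_abs _).trans (abs_of_nonneg (hω n).1)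
    rw [this]; exact hint
  have hYconv := hYsub.exists_ae_tendsto_of_bdd hYbd
  -- conclusion
  filter_upwards [hYconv, hAmono, hUmono] with ω hconv hmonoA hmonoU
  rintro ⟨hV0, hAc⟩
  have hYeq : ∀ n, Y n ω = V n ω + U n ω := by
    intro n
    obtain ⟨m, -, hGA, hNM, -, hlast⟩ := aux_path c hcnn (fun k => A k ω) (fun k => M k ω)
      (hA0 ω) (hM0 ω) (fun k => ξ k ω) (hξ1' ω hV0) (hξ0' ω) n
    have hmn : m = n := hlast fun j _ => hAc j
    rw [hmn] at hGA hNM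
    have hGn : G n ω = A n ω := hGA
    have hNn : N n ω = M n ω := by
      simpa only [hNdef, Finset.sum_apply, Pi.mul_apply, Pi.sub_apply] using hNM
    have hV := hrep n ω
    rw [hYapp, hGn, hNn]
    simp only [hFdef, if_pos hV0]
    linarith
  obtain ⟨L, hL⟩ := hconv
  exact ⟨L, Tendsto.congr hYeq hL⟩

theorem stmt_17 {Ω : Type*} {m0 : MeasurableSpace Ω} {μ : Measure Ω}
    [IsProbabilityMeasure μ] (ℱ : Filtration ℕ m0)
    (V A U M : ℕ → Ω → ℝ)
    (hVnonneg : ∀ k ω, 0 ≤ V k ω)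
    (hVadapted : Adapted ℱ V)
    (hrep : ∀ k ω, V k ω = V 0 ω + A k ω - U k ω + M k ω)
    (hA0 : ∀ ω, A 0 ω = 0) (hU0 : ∀ ω, U 0 ω = 0)
    (hAmono : ∀ᵐ ω ∂μ, Monotone fun k => A k ω)
    (hUmono : ∀ᵐ ω ∂μ, Monotone fun k => U k ω)
    (hApred : ∀ k, StronglyMeasurable[ℱ k] (A (k + 1)))
    (hUpred : ∀ k, StronglyMeasurable[ℱ k] (U (k + 1)))
    (hM : Martingale M ℱ μ) (hM0 : ∀ ω, M 0 ω = 0) :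
    ∀ᵐ ω ∂μ,
      (∃ l : ℝ, Tendsto (fun k => A k ω) atTop (nhds l)) →
        (∃ l : ℝ, Tendsto (fun k => U k ω) atTop (nhds l)) ∧
        (∃ l : ℝ, Tendsto (fun k => V k ω) atTop (nhds l)) := by
  have hkey : ∀ᵐ ω ∂μ, ∀ c : ℕ, (V 0 ω ≤ c ∧ ∀ j, A (j + 1) ω ≤ c) →
      ∃ L, Tendsto (fun n => V n ω + U n ω) atTop (𝓝 L) :=
    ae_all_iff.mpr fun c => key_lemma ℱ V A U M hVnonneg hVadapted hrep hA0 hU0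
      hAmono hUmono hApred hM hM0 c
  filter_upwards [hkey, hAmono, hUmono] with ω hk hmonoA hmonoU
  rintro ⟨l, hl⟩
  have hAle : ∀ k, A k ω ≤ l := fun k => hmonoA.ge_of_tendsto hl k
  obtain ⟨c, hc⟩ := exists_nat_ge (max l (V 0 ω))
  obtain ⟨L, hL⟩ := hk c ⟨(le_max_right _ _).trans hc,
    fun j => (hAle (j + 1)).trans ((le_max_left _ _).trans hc)⟩
  have hUbd : BddAbove (Set.range fun n => U n ω) := by
    obtain ⟨b, hb⟩ := hL.bddAbove_range
    refine ⟨b, ?_⟩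
    rintro x ⟨n, rfl⟩
    exact le_trans (le_add_of_nonneg_left (hVnonneg n ω)) (hb ⟨n, rfl⟩)
  have hUconv : Tendsto (fun n => U n ω) atTop (𝓝 (⨆ n, U n ω)) :=
    tendsto_atTop_ciSup hmonoU hUbd
  refine ⟨⟨_, hUconv⟩, ⟨L - ⨆ n, U n ω, ?_⟩⟩
  have := hL.sub hUconv
  exact this.congr fun n => by ring
end
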